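/- There exists a constant C > 0 such that for all ρ ∈ ℰ₊, denoting by (λ_p)_{p≥1} the nonincreasing sequence of nonzero eigenvalues of ρ counted with multiplicity, one has Σ_{p≥1} p² λ_p ≤ C (Tr ρ + Tr(√H ρ √H)). -/

import Mathlib

/- Common setting (De Nitti–Méhats–Pinaud style quantum entropy minimization on the torus).

We model `L²(0,1)` with periodic boundary conditions as `L²` of the circle `ℝ/ℤ` with its
normalized Haar (Lebesgue) measure.  The free Hamiltonian `H = -d²/dx²` (periodic b.c.) is
diagonal in the Fourier basis `e_j(x) = exp(2iπjx)` with eigenvalues `μ_j = (2πj)²`; all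
trace-type quantities are expressed spectrally through this basis:
* `Tr T = Σ_j ⟨e_j, T e_j⟩`,
* `Tr(√H T √H) = Σ_j μ_j ⟨e_j, T e_j⟩` (since each `e_j` is an eigenvector of `√H`),
* `‖T‖²_{𝒥₂} = Σ_j ‖T e_j‖²`, and `‖√H T‖²_{𝒥₂} = Σ_j μ_j ‖T e_j‖²` for self-adjoint `T`,
* membership in `H¹_per`, the pairing with `H⁻¹_per` etc. are expressed via Fourier
  coefficients (`‖u'‖² = Σ_j μ_j |û_j|²`). -/

open MeasureTheory Real Filter

set_option synthInstance.maxHeartbeats 1000000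
set_option maxHeartbeats 1000000

noncomputable section

namespace QSM

local instance factOnePos : Fact ((0:ℝ) < 1) := ⟨one_pos⟩

/-- The one-dimensional torus `ℝ/ℤ`, modelling `[0,1]` with periodic boundary conditions. -/
abbrev Torus : Type := AddCircle (1:ℝ)

/-- The normalized Haar (= Lebesgue) measure on the torus. -/
abbrev μT : Measure Torus := @AddCircle.haarAddCircle 1 factOnePos

/-- The Hilbert space `L²(0,1)` (with periodic identification). -/
abbrev L2 : Type := Lp ℂ 2 μT

local instance instNUCFCRealL2 :
    NonUnitalContinuousFunctionalCalculus ℝ (L2 →L[ℂ] L2) IsSelfAdjoint :=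
  IsSelfAdjoint.instNonUnitalContinuousFunctionalCalculus

local instance instCFCRealL2 : ContinuousFunctionalCalculus ℝ (L2 →L[ℂ] L2) IsSelfAdjoint :=
  IsSelfAdjoint.instContinuousFunctionalCalculus

/-- The `j`-th Fourier exponential `x ↦ exp(2iπjx)` as an element of `L²`; these form a
Hilbert basis of eigenvectors of `H = -d²/dx²` with periodic boundary conditions. -/
def fE (j : ℤ) : L2 := fourierBasis j

/-- The eigenvalue `(2πj)²` of `H = -d²/dx²` on the Fourier mode `fE j`. -/
def muH (j : ℤ) : ℝ := (2 * π * j) ^ 2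

/-- The absolute value `|T| = √(T⋆T)` of an operator. -/
def absOp (T : L2 →L[ℂ] L2) : L2 →L[ℂ] L2 := CFC.sqrt (star T * T)

/-- The square root `√ρ` of a nonnegative operator. -/
def sqrtOp (ρ : L2 →L[ℂ] L2) : L2 →L[ℂ] L2 := CFC.sqrt ρ

/-- Diagonal trace sum `Σ_j Re⟨e_j, T e_j⟩` (the trace of `T`, when `T` is trace class). -/
def trD (T : L2 →L[ℂ] L2) : ℝ := ∑' j : ℤ, (inner ℂ (fE j) (T (fE j)) : ℂ).re

/-- The trace norm `Tr|T| = ‖T‖_{𝒥₁}`. -/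
def trNorm (T : L2 →L[ℂ] L2) : ℝ := trD (absOp T)

/-- `T` is trace class (`T ∈ 𝒥₁`). -/
def MemJ1 (T : L2 →L[ℂ] L2) : Prop :=
  Summable fun j : ℤ => (inner ℂ (fE j) (absOp T (fE j)) : ℂ).re

/-- Hilbert–Schmidt norm squared `‖T‖²_{𝒥₂} = Σ_j ‖T e_j‖²`. -/
def hsNormSq (T : L2 →L[ℂ] L2) : ℝ := ∑' j : ℤ, ‖T (fE j)‖ ^ 2

/-- `Tr(√H |T| √H) = Σ_j μ_j ⟨e_j, |T| e_j⟩`. -/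
def kinAbs (T : L2 →L[ℂ] L2) : ℝ :=
  ∑' j : ℤ, muH j * (inner ℂ (fE j) (absOp T (fE j)) : ℂ).re

/-- The kinetic energy `Tr(√H ρ √H) = Σ_j μ_j ⟨e_j, ρ e_j⟩`. -/
def kinE (ρ : L2 →L[ℂ] L2) : ℝ := ∑' j : ℤ, muH j * (inner ℂ (fE j) (ρ (fE j)) : ℂ).re

/-- `‖√H T‖²_{𝒥₂} = Σ_j μ_j ‖T e_j‖²` (valid for self-adjoint `T`). -/
def kinHSNormSq (T : L2 →L[ℂ] L2) : ℝ := ∑' j : ℤ, muH j * ‖T (fE j)‖ ^ 2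

/-- The energy space `ℰ`: self-adjoint trace-class `ρ` with `√H|ρ|√H` trace class. -/
def MemE (ρ : L2 →L[ℂ] L2) : Prop :=
  IsSelfAdjoint ρ ∧ MemJ1 ρ ∧
    Summable fun j : ℤ => muH j * (inner ℂ (fE j) (absOp ρ (fE j)) : ℂ).re

/-- The cone `ℰ₊` of nonnegative elements of the energy space. -/
def MemEplus (ρ : L2 →L[ℂ] L2) : Prop := MemE ρ ∧ 0 ≤ ρ

/-- The regularised entropy function `β_η(s) = (s+η)log(s+η) − s − η log η`;
for `η = 0` this is `β(s) = s log s − s` (with the convention `0 log 0 = 0`). -/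
def betaEnt (η : ℝ) (s : ℝ) : ℝ := (s + η) * Real.log (s + η) - s - η * Real.log η

/-- The von Neumann entropy `Tr(ρ log ρ − ρ)` (via the functional calculus). -/
def entropy (ρ : L2 →L[ℂ] L2) : ℝ := trD (cfc (fun s : ℝ => s * Real.log s - s) ρ)

/-- The free energy `F(ρ) = Tr(ρ log ρ − ρ) + Tr(√H ρ √H)`. -/
def freeEnergy (ρ : L2 →L[ℂ] L2) : ℝ := entropy ρ + kinE ρ

/-- The trace `Tr(Φρ) = Σ_j ⟨e_j, Φ·(ρ e_j)⟩` of `ρ` against a multiplication operator `Φ`. -/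
def traceAgainst (ρ : L2 →L[ℂ] L2) (Φ : Torus → ℂ) : ℂ :=
  ∑' j : ℤ, ∫ x, (starRingEnd ℂ) ((fE j : Torus → ℂ) x) * Φ x * ((ρ (fE j) : Torus → ℂ) x) ∂μT

/-- `n` is the local density `n[ρ]` of `ρ`: it is integrable and `Tr(Φρ) = ∫ Φ n`
for every bounded measurable `Φ` (acting by multiplication). -/
def IsDensity (ρ : L2 →L[ℂ] L2) (n : Torus → ℝ) : Prop :=
  Integrable n μT ∧
    ∀ Φ : Torus → ℂ, Measurable Φ → (∃ C, ∀ x, ‖Φ x‖ ≤ C) →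
      traceAgainst ρ Φ = ∫ x, Φ x * (n x : ℂ) ∂μT

/-- `H¹_per`-membership of a function, via its Fourier coefficients. -/
def MemH1Fun (u : Torus → ℂ) : Prop :=
  Integrable u μT ∧ Summable fun j : ℤ => (1 + muH j) * ‖fourierCoeff u j‖ ^ 2

/-- `H¹_per`-membership of an `L²` element, via its Fourier coefficients. -/
def MemH1 (u : L2) : Prop :=
  Summable fun j : ℤ => (1 + muH j) * ‖fourierBasis.repr u j‖ ^ 2

/-- The Dirichlet (kinetic) sesquilinear form `(√H u, √H v) = (u', v')`. -/
def QH (u v : L2) : ℂ :=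
  ∑' j : ℤ, (muH j : ℂ) * (starRingEnd ℂ) (fourierBasis.repr u j) * fourierBasis.repr v j

/-- Membership in `H⁻¹_per = (H¹_per)'` of the distribution `A = Σ_j a_j e_j` given by its
Fourier coefficients `a`. -/
def MemHm1 (a : ℤ → ℂ) : Prop := Summable fun j : ℤ => ‖a j‖ ^ 2 / (1 + muH j)

/-- The duality pairing `⟨A, v⟩_{H⁻¹_per, H¹_per} = Σ_j a_j v̂_{-j}` ("`∫ A v`"). -/
def pairHm1 (a : ℤ → ℂ) (v : Torus → ℂ) : ℂ := ∑' j : ℤ, a j * fourierCoeff v (-j)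

/-- The sesquilinear form `Q_A(u,v) = (u',v') + ⟨A, ū v⟩` for `A ∈ H⁻¹_per` (Fourier data `a`);
its diagonal is `Q_A(φ,φ) = ‖φ'‖² + ⟨A, |φ|²⟩`. -/
def QA (a : ℤ → ℂ) (u v : L2) : ℂ :=
  QH u v + pairHm1 a fun x => (starRingEnd ℂ) ((u : Torus → ℂ) x) * ((v : Torus → ℂ) x)

/-- The sesquilinear form `Q_A(u,v) = (u',v') + ∫ A ū v` for a potential `A ∈ L^∞`. -/
def QAfun (A : Torus → ℝ) (u v : L2) : ℂ :=
  QH u v + ∫ x, (A x : ℂ) * (starRingEnd ℂ) ((u : Torus → ℂ) x) * ((v : Torus → ℂ) x) ∂μT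

/-- `ρ = exp(−(H+A))` where `A ∈ H⁻¹_per`, given by its Fourier coefficients `a`, and `H+A`
is the self-adjoint operator (with compact resolvent) associated with the form `Q_A`:
there is a complete orthonormal system `(φ_p) ⊂ H¹_per` and reals `(μ_p)` such that the `φ_p`
are exactly the form-eigenvectors of `Q_A` with eigenvalues `μ_p`, and `ρ φ_p = exp(−μ_p) φ_p`. -/
def IsExpNegHA (a : ℤ → ℂ) (ρ : L2 →L[ℂ] L2) : Prop :=
  ∃ (φ : ℕ → L2) (μ : ℕ → ℝ),
    Orthonormal ℂ φ ∧ (Submodule.span ℂ (Set.range φ)).topologicalClosure = ⊤ ∧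
    ∀ p, MemH1 (φ p) ∧ ρ (φ p) = (Real.exp (-μ p) : ℂ) • φ p ∧
      ∀ ψ : L2, MemH1 ψ → QA a (φ p) ψ = (μ p : ℂ) * (inner ℂ (φ p) ψ : ℂ)

/-- `ρ = exp(−(H+A))` for a (bounded) real potential `A`, in the quadratic-form sense. -/
def IsExpNegHAfun (A : Torus → ℝ) (ρ : L2 →L[ℂ] L2) : Prop :=
  ∃ (φ : ℕ → L2) (μ : ℕ → ℝ),
    Orthonormal ℂ φ ∧ (Submodule.span ℂ (Set.range φ)).topologicalClosure = ⊤ ∧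
    ∀ p, MemH1 (φ p) ∧ ρ (φ p) = (Real.exp (-μ p) : ℂ) • φ p ∧
      ∀ ψ : L2, MemH1 ψ → QAfun A (φ p) ψ = (μ p : ℂ) * (inner ℂ (φ p) ψ : ℂ)

/-- A complete orthonormal eigenbasis of `ρ` with nonincreasing nonnegative eigenvalues
(the nonzero eigenvalues in nonincreasing order, counted with multiplicity, padded by `0`s). -/
def IsEigenbasis (ρ : L2 →L[ℂ] L2) (φ : ℕ → L2) (lam : ℕ → ℝ) : Prop :=
  Orthonormal ℂ φ ∧ (Submodule.span ℂ (Set.range φ)).topologicalClosure = ⊤ ∧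
    Antitone lam ∧ (∀ p, 0 ≤ lam p) ∧ ∀ p, ρ (φ p) = (lam p : ℂ) • φ p

/-- The hypothesis «`n ∈ H¹_per` and `n > 0` on `[0,1]`», stated for the continuous
representative of `n`. -/
def GoodDensity (n : Torus → ℝ) : Prop :=
  Continuous n ∧ (∀ x, 0 < n x) ∧
    Summable fun j : ℤ => (1 + muH j) * ‖fourierCoeff (fun x => (n x : ℂ)) j‖ ^ 2

/-- The penalized free energy `F_ε(ρ) = F(ρ) + (1/(2ε)) ‖n[ρ] − n‖²_{L²}`,
where `nρ = n[ρ]` is the density of `ρ`. -/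
def Feps (ε : ℝ) (n : Torus → ℝ) (ρ : L2 →L[ℂ] L2) (nρ : Torus → ℝ) : ℝ :=
  freeEnergy ρ + (1 / (2 * ε)) * ∫ x, (nρ x - n x) ^ 2 ∂μT

end QSM
open ENNReal

namespace QSM

local instance : Fact ((0:ℝ) < 1) := ⟨one_pos⟩

local instance instNUCFCRealL2' :
    NonUnitalContinuousFunctionalCalculus ℝ (L2 →L[ℂ] L2) IsSelfAdjoint :=
  IsSelfAdjoint.instNonUnitalContinuousFunctionalCalculus

local instance instCFCRealL2' : ContinuousFunctionalCalculus ℝ (L2 →L[ℂ] L2) IsSelfAdjoint :=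
  IsSelfAdjoint.instContinuousFunctionalCalculus

private lemma nat_key (N : ℕ) : N^3 ≤ 16*N + 576*(N/3+1)^2*(N - (2*(N/3)+1)) := by
  rcases le_or_gt N 4 with h | h
  · interval_cases N <;> simp
  · have key : ∀ K M : ℕ, 1 ≤ K → 3*K ≤ N → N ≤ 3*K+2 → N = 2*K+1+M →
        N^3 ≤ 16*N + 576*(K+1)^2*M := by
      intro K M hK1 h1 h2 hMN
      have hN3 : N^3 ≤ 27*(K+1)^3 := by
        calc N^3 ≤ (3*(K+1))^3 := Nat.pow_le_pow_left (by omega) 3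
          _ = 27*(K+1)^3 := by ring
      rcases Nat.lt_or_ge K 2 with hk | hk
      · have hk1 : K = 1 := by omega
        subst hk1
        have h5 : N = 5 := by omega
        have hm2 : M = 2 := by omega
        subst h5 hm2
        norm_num
      · have h3 : K + 1 ≤ 3 * M := by omega
        calc N^3 ≤ 27*(K+1)^3 := hN3
          _ ≤ 192*(K+1)^2*(3*M) := by
              have h4 : 27*(K+1)^3 ≤ 192*(K+1)^2*(K+1) := by nlinarith
              calc 27*(K+1)^3 ≤ 192*(K+1)^2*(K+1) := h4
                _ ≤ 192*(K+1)^2*(3*M) := Nat.mul_le_mul_left _ h3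
          _ = 576*(K+1)^2*M := by ring
          _ ≤ 16*N + 576*(K+1)^2*M := by omega
    exact key (N/3) (N-(2*(N/3)+1)) (by omega) (by omega) (by omega) (by omega)

private lemma abel_ennreal (a b d L : ℕ → ℝ≥0∞)
    (hL : ∀ p, L p = ∑' q, if p ≤ q then d q else 0)
    (hab : ∀ N, ∑ p ∈ Finset.range N, b p ≤ ∑ p ∈ Finset.range N, a p) :
    ∑' p, b p * L p ≤ ∑' p, a p * L p := by
  have key : ∀ f : ℕ → ℝ≥0∞,
      ∑' p, f p * L p = ∑' q, (∑ p ∈ Finset.range (q+1), f p) * d q := by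
    intro f
    calc ∑' p, f p * L p = ∑' p, ∑' q, (if p ≤ q then f p * d q else 0) := by
          refine tsum_congr fun p => ?_
          rw [hL p, ← ENNReal.tsum_mul_left]
          exact tsum_congr fun q => by split <;> simp
      _ = ∑' q, ∑' p, (if p ≤ q then f p * d q else 0) := ENNReal.tsum_comm
      _ = ∑' q, (∑ p ∈ Finset.range (q+1), f p) * d q := by
          refine tsum_congr fun q => ?_
          rw [tsum_eq_sum (s := Finset.range (q+1))
            (fun p hp => by rw [if_neg]; simp at hp; omega), Finset.sum_mul]
          refine Finset.sum_congr rfl fun p hp => ?_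
          rw [if_pos (by simp at hp; omega)]
  rw [key a, key b]
  exact ENNReal.tsum_le_tsum fun q => mul_le_mul_left (hab (q+1)) _

private lemma telescope_hasSum {f : ℕ → ℝ} (hf : Antitone f)
    (h0 : Tendsto f atTop (nhds 0)) (p : ℕ) :
    HasSum (fun n => f (p+n) - f (p+n+1)) (f p) := by
  have hnn : ∀ n, 0 ≤ f n := fun n =>
    le_of_tendsto h0 (eventually_atTop.2 ⟨n, fun m hm => hf hm⟩)
  have hpart : ∀ N, ∑ i ∈ Finset.range N, (f (p+i) - f (p+i+1)) = f p - f (p+N) := by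
    intro N
    exact Finset.sum_range_sub' (fun i => f (p+i)) N
  have hsum : Summable (fun n => f (p+n) - f (p+n+1)) :=
    summable_of_sum_range_le (fun n => sub_nonneg.2 (hf (by omega)))
      (fun n => by rw [hpart]; linarith [hnn (p+n)])
  have h1 : Tendsto (fun N => ∑ i ∈ Finset.range N, (f (p+i) - f (p+i+1))) atTop
      (nhds (f p)) := by
    simp only [hpart]
    have h2 : Tendsto (fun N : ℕ => f (p+N)) atTop (nhds 0) := by
      have := h0.comp (tendsto_add_atTop_nat p)
      simpa [Function.comp_def, Nat.add_comm p] using this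
    simpa using tendsto_const_nhds.sub h2
  have := tendsto_nhds_unique hsum.hasSum.tendsto_sum_nat h1
  exact this ▸ hsum.hasSum

private lemma bathtub (N : ℕ) (t : ℤ → ℝ≥0∞) (ht1 : ∀ j, t j ≤ 1)
    (htN : ∑' j, t j = N) :
    (N:ℝ≥0∞)^3 ≤ 16*N + 16 * ∑' j, ENNReal.ofReal (muH j) * t j := by
  set K := N / 3 with hKdef
  set S : Finset ℤ := Finset.Icc (-(K:ℤ)) (K:ℤ) with hS
  have hcard : S.card = 2*K+1 := by
    rw [hS, Int.card_Icc]; omega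
  set X : ℝ≥0∞ := ∑' j, (if j ∈ S then 0 else t j) with hX
  have hsplit : (N:ℝ≥0∞) ≤ ((2*K+1 : ℕ) : ℝ≥0∞) + X := by
    have hdec : ∑' j, t j = (∑' j, (if j ∈ S then t j else 0)) + X := by
      rw [hX, ← ENNReal.tsum_add]
      exact tsum_congr fun j => by split <;> simp
    have hin : ∑' j, (if j ∈ S then t j else 0) ≤ ((2*K+1:ℕ):ℝ≥0∞) := by
      rw [tsum_eq_sum (s := S) (fun j hj => if_neg hj)]
      calc ∑ j ∈ S, (if j ∈ S then t j else 0)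
          ≤ ∑ _j ∈ S, 1 := Finset.sum_le_sum fun j hj => by rw [if_pos hj]; exact ht1 j
        _ = (S.card : ℝ≥0∞) := by simp
        _ = _ := by rw [hcard]
    calc (N:ℝ≥0∞) = (∑' j, (if j ∈ S then t j else 0)) + X := htN ▸ hdec
      _ ≤ _ := add_le_add_left hin X
  have hpt : ∀ j, ((36*(K+1)^2 : ℕ):ℝ≥0∞) * (if j ∈ S then 0 else t j)
      ≤ ENNReal.ofReal (muH j) * t j := by
    intro j
    by_cases hj : j ∈ S
    · simp [hj]
    · rw [if_neg hj]
      refine mul_le_mul_left ?_ _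
      rw [← ENNReal.ofReal_natCast]
      refine ENNReal.ofReal_le_ofReal ?_
      have hjK : ((K:ℤ)+1) ≤ |j| := by
        rw [hS, Finset.mem_Icc] at hj
        rcases abs_cases j with h | h <;> omega
      have hj2 : ((K:ℝ)+1)^2 ≤ (j:ℝ)^2 := by
        rw [← sq_abs (j:ℝ)]
        have : ((K:ℝ)+1) ≤ |(j:ℝ)| := by
          rw [← Int.cast_abs]
          exact_mod_cast hjK
        exact pow_le_pow_left₀ (by positivity) this 2
      have hpi := Real.pi_gt_three
      have h9 : (9:ℝ) ≤ π^2 := by nlinarith [Real.pi_pos]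
      have h36 : 36*((j:ℝ))^2 ≤ 4*π^2*(j:ℝ)^2 := by
        nlinarith [mul_le_mul_of_nonneg_right h9 (sq_nonneg (j:ℝ))]
      rw [muH]
      push_cast
      calc (36*((K:ℝ)+1)^2) ≤ 36*(j:ℝ)^2 := by nlinarith
        _ ≤ 4*π^2*(j:ℝ)^2 := h36
        _ = (2*π*(j:ℝ))^2 := by ring
  have hsum_bd : ((36*(K+1)^2:ℕ):ℝ≥0∞) * X ≤ ∑' j, ENNReal.ofReal (muH j) * t j := by
    rw [hX, ← ENNReal.tsum_mul_left]
    exact ENNReal.tsum_le_tsum hpt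
  have hXge : ((N - (2*K+1) : ℕ):ℝ≥0∞) ≤ X := by
    rw [ENNReal.natCast_sub]
    exact tsub_le_iff_left.mpr hsplit
  have hnat := nat_key N
  calc (N:ℝ≥0∞)^3 = ((N^3 : ℕ):ℝ≥0∞) := by push_cast; ring
    _ ≤ ((16*N + 576*(K+1)^2*(N - (2*K+1)) : ℕ):ℝ≥0∞) := by exact_mod_cast hnat
    _ = 16*N + 16*(((36*(K+1)^2:ℕ):ℝ≥0∞) * ((N - (2*K+1):ℕ):ℝ≥0∞)) := by push_cast; ring
    _ ≤ 16*N + 16*(((36*(K+1)^2:ℕ):ℝ≥0∞) * X) :=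
        add_le_add_right (mul_le_mul_right (mul_le_mul_right hXge _) 16) _
    _ ≤ 16*N + 16 * ∑' j, ENNReal.ofReal (muH j) * t j :=
        add_le_add_right (mul_le_mul_right hsum_bd 16) _

private def Lofe (lam : ℕ → ℝ) (p : ℕ) : ℝ≥0∞ := ENNReal.ofReal (lam p)

private def cof (φ : ℕ → L2) (p : ℕ) (j : ℤ) : ℝ≥0∞ :=
  ENNReal.ofReal (‖(inner ℂ (φ p) (fE j) : ℂ)‖^2)

private def mof (j : ℤ) : ℝ≥0∞ := ENNReal.ofReal (muH j)

private def Qof (φ : ℕ → L2) (p : ℕ) : ℝ≥0∞ := ∑' j, mof j * cof φ p j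

/-- There is `C > 0` such that for every `ρ ∈ ℰ₊` with nonincreasing
eigenvalues `(λ_p)` (counted with multiplicity, padded by zeros), one has
`Σ_p p² λ_p ≤ C (Tr ρ + Tr(√H ρ √H))` (indices shifted: `lam 0` is the first eigenvalue). -/
theorem weighted_eigenvalue_sum_bound :
    ∃ C : ℝ, 0 < C ∧ ∀ (ρ : L2 →L[ℂ] L2) (φ : ℕ → L2) (lam : ℕ → ℝ),
      MemEplus ρ → IsEigenbasis ρ φ lam →
      Summable (fun p : ℕ => ((p : ℝ) + 1) ^ 2 * lam p) ∧
        ∑' p : ℕ, ((p : ℝ) + 1) ^ 2 * lam p ≤ C * (trD ρ + kinE ρ) := by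
  refine ⟨16, by norm_num, ?_⟩
  rintro ρ φ lam ⟨⟨hsa, hJ1, hkinsum⟩, hpos⟩ ⟨hON, hdense, hanti, hnn, heig⟩
  have habs : absOp ρ = ρ := by
    rw [absOp, hsa.star_eq]
    exact CFC.sqrt_mul_self ρ hpos
  unfold MemJ1 at hJ1
  rw [habs] at hJ1
  rw [habs] at hkinsum
  -- eigenbasis as HilbertBasis
  let b : HilbertBasis ℕ ℂ L2 := HilbertBasis.mk hON (by rw [hdense])
  have hb : ∀ p, b p = φ p := fun p => congrFun (HilbertBasis.coe_mk hON _) p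
  -- spectral resolution of the diagonal entries
  have hA : ∀ j : ℤ, HasSum (fun p => lam p * ‖(inner ℂ (φ p) (fE j) : ℂ)‖^2)
      ((inner ℂ (fE j) (ρ (fE j)) : ℂ).re) := by
    intro j
    have h1 := b.hasSum_inner_mul_inner (fE j) (ρ (fE j))
    have h2 : ∀ p, (inner ℂ (fE j) (b p) * inner ℂ (b p) (ρ (fE j)) : ℂ)
        = ((lam p * ‖(inner ℂ (φ p) (fE j) : ℂ)‖^2 : ℝ) : ℂ) := by
      intro p
      have hsym : (inner ℂ (ρ (φ p)) (fE j) : ℂ) = inner ℂ (φ p) (ρ (fE j)) :=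
        (ContinuousLinearMap.isSelfAdjoint_iff_isSymmetric.mp hsa) (φ p) (fE j)
      have hre : (inner ℂ (φ p) (ρ (fE j)) : ℂ) = (lam p : ℂ) * inner ℂ (φ p) (fE j) := by
        rw [← hsym, heig p, inner_smul_left, Complex.conj_ofReal]
      have hcc : (inner ℂ (fE j) (φ p) : ℂ) = (starRingEnd ℂ) (inner ℂ (φ p) (fE j)) :=
        (inner_conj_symm (fE j) (φ p)).symm
      rw [hb p, hre, hcc]
      rw [show ∀ z w : ℂ, (starRingEnd ℂ) z * (w * z) = w * ((starRingEnd ℂ) z * z) from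
        fun z w => by ring, RCLike.conj_mul]
      norm_cast
      exact (Complex.ofReal_mul _ _).symm
    rw [funext h2] at h1
    have h4 := h1.mapL Complex.reCLM
    simpa only [Complex.reCLM_apply, Complex.ofReal_re] using h4
  have hrnn : ∀ j, 0 ≤ (inner ℂ (fE j) (ρ (fE j)) : ℂ).re := by
    intro j
    rw [← (hA j).tsum_eq]
    exact tsum_nonneg fun p => mul_nonneg (hnn p) (sq_nonneg _)
  -- Parseval for each eigenvector
  have hPars : ∀ p, HasSum (fun j : ℤ => ‖(inner ℂ (φ p) (fE j) : ℂ)‖^2) 1 := by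
    intro p
    have h1 := fourierBasis.hasSum_inner_mul_inner (φ p) (φ p)
    have h2 : ∀ j : ℤ, (inner ℂ (φ p) (fourierBasis j) * inner ℂ (fourierBasis j) (φ p) : ℂ)
        = ((‖(inner ℂ (φ p) (fE j) : ℂ)‖^2 : ℝ) : ℂ) := by
      intro j
      have hcc : (inner ℂ (fourierBasis j) (φ p) : ℂ)
          = (starRingEnd ℂ) (inner ℂ (φ p) (fourierBasis j)) :=
        (inner_conj_symm (fourierBasis j) (φ p)).symm
      rw [hcc, RCLike.mul_conj]
      norm_cast
    rw [funext h2] at h1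
    have h3 : (inner ℂ (φ p) (φ p) : ℂ) = 1 := by
      rw [inner_self_eq_norm_sq_to_K, hON.1 p]
      norm_num
    rw [h3] at h1
    have h4 := h1.mapL Complex.reCLM
    simpa only [Complex.reCLM_apply, Complex.ofReal_re, Complex.one_re] using h4
  -- move to ℝ≥0∞
  have hcj : ∀ p, ∑' j, (cof φ) p j = 1 := by
    intro p
    simp only [cof]
    calc ∑' j : ℤ, ENNReal.ofReal (‖(inner ℂ (φ p) (fE j) : ℂ)‖^2)
        = ENNReal.ofReal (∑' j : ℤ, ‖(inner ℂ (φ p) (fE j) : ℂ)‖^2) :=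
          (ENNReal.ofReal_tsum_of_nonneg (fun j => sq_nonneg _) (hPars p).summable).symm
      _ = ENNReal.ofReal 1 := by rw [(hPars p).tsum_eq]
      _ = 1 := ENNReal.ofReal_one
  have hrow : ∀ j, ENNReal.ofReal ((inner ℂ (fE j) (ρ (fE j)) : ℂ).re)
      = ∑' p, (Lofe lam) p * (cof φ) p j := by
    intro j
    calc ENNReal.ofReal ((inner ℂ (fE j) (ρ (fE j)) : ℂ).re)
        = ENNReal.ofReal (∑' p, lam p * ‖(inner ℂ (φ p) (fE j) : ℂ)‖^2) := by
          rw [(hA j).tsum_eq]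
      _ = ∑' p, ENNReal.ofReal (lam p * ‖(inner ℂ (φ p) (fE j) : ℂ)‖^2) :=
          ENNReal.ofReal_tsum_of_nonneg (fun p => mul_nonneg (hnn p) (sq_nonneg _))
            (hA j).summable
      _ = ∑' p, (Lofe lam) p * (cof φ) p j :=
          tsum_congr fun p => by rw [ENNReal.ofReal_mul (hnn p)]; rfl
  have hmnn : ∀ j : ℤ, 0 ≤ muH j := fun j => sq_nonneg _
  have hTr : ENNReal.ofReal (trD ρ) = ∑' p, (Lofe lam) p := by
    calc ENNReal.ofReal (trD ρ)
        = ∑' j, ENNReal.ofReal ((inner ℂ (fE j) (ρ (fE j)) : ℂ).re) := by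
          rw [trD]
          exact ENNReal.ofReal_tsum_of_nonneg hrnn hJ1
      _ = ∑' j, ∑' p, (Lofe lam) p * (cof φ) p j := tsum_congr hrow
      _ = ∑' p, ∑' j, (Lofe lam) p * (cof φ) p j := ENNReal.tsum_comm
      _ = ∑' p, (Lofe lam) p := by
          refine tsum_congr fun p => ?_
          rw [ENNReal.tsum_mul_left, hcj p, mul_one]
  have hKin : ENNReal.ofReal (kinE ρ) = ∑' p, (Lofe lam) p * (Qof φ) p := by
    calc ENNReal.ofReal (kinE ρ)
        = ∑' j, ENNReal.ofReal (muH j * (inner ℂ (fE j) (ρ (fE j)) : ℂ).re) := by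
          rw [kinE]
          exact ENNReal.ofReal_tsum_of_nonneg (fun j => mul_nonneg (hmnn j) (hrnn j)) hkinsum
      _ = ∑' j, ∑' p, mof j * ((Lofe lam) p * (cof φ) p j) := by
          refine tsum_congr fun j => ?_
          rw [ENNReal.ofReal_mul (hmnn j), hrow j, ENNReal.tsum_mul_left]
          rfl
      _ = ∑' p, ∑' j, mof j * ((Lofe lam) p * (cof φ) p j) := ENNReal.tsum_comm
      _ = ∑' p, (Lofe lam) p * (Qof φ) p := by
          refine tsum_congr fun p => ?_
          calc ∑' j, mof j * ((Lofe lam) p * (cof φ) p j) = ∑' j, (Lofe lam) p * (mof j * (cof φ) p j) :=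
                tsum_congr fun j => by ring
            _ = (Lofe lam) p * (Qof φ) p := by rw [ENNReal.tsum_mul_left]; rfl
  -- partial sum lower bound via bathtub principle
  have hPS : ∀ N, ∑ p ∈ Finset.range N, ((p:ℝ≥0∞)+1)^2
      ≤ ∑ p ∈ Finset.range N, 16 * (1 + (Qof φ) p) := by
    intro N
    have ht1 : ∀ j, ∑ p ∈ Finset.range N, (cof φ) p j ≤ 1 := by
      intro j
      calc ∑ p ∈ Finset.range N, (cof φ) p j
          = ENNReal.ofReal (∑ p ∈ Finset.range N, ‖(inner ℂ (φ p) (fE j) : ℂ)‖^2) := by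
            simp only [cof]
            exact (ENNReal.ofReal_sum_of_nonneg (fun p _ => sq_nonneg _)).symm
        _ ≤ ENNReal.ofReal 1 := by
            refine ENNReal.ofReal_le_ofReal ?_
            have hb1 := hON.sum_inner_products_le (𝕜 := ℂ) (x := fE j) (s := Finset.range N)
            have hnorm : ‖fE j‖ = 1 := fourierBasis.orthonormal.1 j
            rw [hnorm] at hb1
            simpa using hb1
        _ = 1 := ENNReal.ofReal_one
    have htN : ∑' j, ∑ p ∈ Finset.range N, (cof φ) p j = N := by
      calc ∑' j, ∑ p ∈ Finset.range N, (cof φ) p j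
          = ∑ p ∈ Finset.range N, ∑' j, (cof φ) p j := Summable.tsum_finsetSum (fun i _ => ENNReal.summable)
        _ = ∑ p ∈ Finset.range N, 1 := Finset.sum_congr rfl fun p _ => hcj p
        _ = N := by simp
    have hQt : ∑ p ∈ Finset.range N, (Qof φ) p
        = ∑' j, ENNReal.ofReal (muH j) * ∑ p ∈ Finset.range N, (cof φ) p j := by
      simp only [Qof, mof]
      calc ∑ p ∈ Finset.range N, ∑' j, ENNReal.ofReal (muH j) * (cof φ) p j
          = ∑' j, ∑ p ∈ Finset.range N, ENNReal.ofReal (muH j) * (cof φ) p j :=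
            (Summable.tsum_finsetSum (fun i _ => ENNReal.summable)).symm
        _ = ∑' j, ENNReal.ofReal (muH j) * ∑ p ∈ Finset.range N, (cof φ) p j :=
            tsum_congr fun j => (Finset.mul_sum _ _ _).symm
    have hbath := bathtub N (fun j => ∑ p ∈ Finset.range N, (cof φ) p j) ht1 htN
    have hnat3 : ∑ p ∈ Finset.range N, (p+1)^2 ≤ N^3 := by
      calc ∑ p ∈ Finset.range N, (p+1)^2
          ≤ ∑ _p ∈ Finset.range N, N^2 :=
            Finset.sum_le_sum fun p hp => Nat.pow_le_pow_left (by simp at hp; omega) 2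
        _ = N*N^2 := by simp [Finset.sum_const, mul_comm]
        _ = N^3 := by ring
    calc ∑ p ∈ Finset.range N, ((p:ℝ≥0∞)+1)^2
        = ((∑ p ∈ Finset.range N, (p+1)^2 : ℕ) : ℝ≥0∞) := by push_cast; rfl
      _ ≤ ((N^3 : ℕ) : ℝ≥0∞) := by exact_mod_cast hnat3
      _ = (N:ℝ≥0∞)^3 := by push_cast; rfl
      _ ≤ 16*N + 16 * ∑' j, ENNReal.ofReal (muH j) * ∑ p ∈ Finset.range N, (cof φ) p j :=
          hbath
      _ = 16*N + 16 * ∑ p ∈ Finset.range N, (Qof φ) p := by rw [hQt]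
      _ = ∑ p ∈ Finset.range N, 16 * (1 + (Qof φ) p) := by
          symm
          calc ∑ p ∈ Finset.range N, 16 * (1 + (Qof φ) p)
              = ∑ p ∈ Finset.range N, ((16:ℝ≥0∞) + 16 * (Qof φ) p) :=
                Finset.sum_congr rfl fun p _ => by rw [mul_add, mul_one]
            _ = ∑ _p ∈ Finset.range N, (16:ℝ≥0∞) + ∑ p ∈ Finset.range N, 16 * (Qof φ) p :=
                Finset.sum_add_distrib
            _ = 16*N + 16 * ∑ p ∈ Finset.range N, (Qof φ) p := by
                rw [Finset.sum_const, Finset.card_range, ← Finset.mul_sum]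
                simp [nsmul_eq_mul, mul_comm]
  -- summability of eigenvalues and telescoping representation
  have hLfin : ∑' p, (Lofe lam) p ≠ ∞ := by rw [← hTr]; exact ENNReal.ofReal_ne_top
  have hlam_sum : Summable lam := by
    have h1 := ENNReal.summable_toReal hLfin
    exact h1.congr fun p => ENNReal.toReal_ofReal (hnn p)
  have hlam0 : Tendsto lam atTop (nhds 0) := hlam_sum.tendsto_atTop_zero
  let d : ℕ → ℝ≥0∞ := fun q => ENNReal.ofReal (lam q - lam (q+1))
  have hL : ∀ p, (Lofe lam) p = ∑' q, if p ≤ q then d q else 0 := by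
    intro p
    have htel := telescope_hasSum hanti hlam0 p
    have h1 : (Lofe lam) p = ∑' n : ℕ, d (p+n) := by
      simp only [Lofe]
      rw [← htel.tsum_eq, ENNReal.ofReal_tsum_of_nonneg
        (fun n => sub_nonneg.2 (hanti (by omega))) htel.summable]
    have hinj : Function.Injective (fun n : ℕ => p + n) := fun a b h => by
      simpa using h
    have h2 := hinj.tsum_eq (f := fun q => if p ≤ q then d q else 0)
      (fun x hx => by
        have hpx : p ≤ x := by
          by_contra hc
          exact hx (if_neg hc)
        exact ⟨x - p, by show p + (x - p) = x; omega⟩)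
    calc (Lofe lam) p = ∑' n : ℕ, d (p+n) := h1
      _ = ∑' n : ℕ, (if p ≤ p + n then d (p+n) else 0) :=
          tsum_congr fun n => (if_pos (by omega)).symm
      _ = ∑' q, if p ≤ q then d q else 0 := h2
  -- Abel summation
  have habel := abel_ennreal (fun p : ℕ => 16*(1+(Qof φ) p)) (fun p : ℕ => ((p:ℝ≥0∞)+1)^2) d (Lofe lam) hL hPS
  have hsum_eq : ∑' p, (16*(1+(Qof φ) p)) * (Lofe lam) p
      = 16 * (ENNReal.ofReal (trD ρ) + ENNReal.ofReal (kinE ρ)) := by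
    rw [hTr, hKin]
    calc ∑' p : ℕ, (16*(1+(Qof φ) p)) * (Lofe lam) p
        = ∑' p : ℕ, (16 * (Lofe lam) p + 16 * ((Lofe lam) p * (Qof φ) p)) :=
          tsum_congr fun p => by ring
      _ = 16 * ∑' p : ℕ, (Lofe lam) p + 16 * ∑' p : ℕ, ((Lofe lam) p * (Qof φ) p) := by
          rw [ENNReal.tsum_add, ENNReal.tsum_mul_left, ENNReal.tsum_mul_left]
      _ = _ := by ring
  have htrnn : 0 ≤ trD ρ := by rw [trD]; exact tsum_nonneg hrnn
  have hkinn : 0 ≤ kinE ρ := by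
    rw [kinE]; exact tsum_nonneg fun j => mul_nonneg (hmnn j) (hrnn j)
  have hterm : ∀ p : ℕ, ((p:ℝ≥0∞)+1)^2 * (Lofe lam) p = ENNReal.ofReal (((p:ℝ)+1)^2 * lam p) := by
    intro p
    have e1 : ENNReal.ofReal (((p:ℝ)+1)^2 * lam p)
        = ENNReal.ofReal (((p:ℝ)+1)^2) * ENNReal.ofReal (lam p) :=
      ENNReal.ofReal_mul (by positivity)
    have e2 : ENNReal.ofReal (((p:ℝ)+1)^2) = ((p:ℝ≥0∞)+1)^2 := by
      rw [ENNReal.ofReal_pow (by positivity : (0:ℝ) ≤ (p:ℝ)+1),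
        ENNReal.ofReal_add (Nat.cast_nonneg p) zero_le_one, ENNReal.ofReal_natCast,
        ENNReal.ofReal_one]
    rw [e1, e2]
    rfl
  have h16 : ENNReal.ofReal (16 * (trD ρ + kinE ρ))
      = 16 * (ENNReal.ofReal (trD ρ) + ENNReal.ofReal (kinE ρ)) := by
    rw [ENNReal.ofReal_mul (by norm_num : (0:ℝ) ≤ 16), ENNReal.ofReal_add htrnn hkinn]
    norm_num
  have hBig : ∑' p : ℕ, ENNReal.ofReal (((p:ℝ)+1)^2 * lam p)
      ≤ ENNReal.ofReal (16 * (trD ρ + kinE ρ)) := by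
    calc ∑' p : ℕ, ENNReal.ofReal (((p:ℝ)+1)^2 * lam p)
        = ∑' p : ℕ, ((p:ℝ≥0∞)+1)^2 * (Lofe lam) p := (tsum_congr hterm).symm
      _ ≤ ∑' p : ℕ, (16*(1+(Qof φ) p)) * (Lofe lam) p := habel
      _ = 16 * (ENNReal.ofReal (trD ρ) + ENNReal.ofReal (kinE ρ)) := hsum_eq
      _ = ENNReal.ofReal (16 * (trD ρ + kinE ρ)) := h16.symm
  have hfin : ∑' p : ℕ, ENNReal.ofReal (((p:ℝ)+1)^2 * lam p) ≠ ∞ :=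
    ne_top_of_le_ne_top ENNReal.ofReal_ne_top hBig
  have htermnn : ∀ p : ℕ, 0 ≤ ((p:ℝ)+1)^2 * lam p :=
    fun p => mul_nonneg (by positivity) (hnn p)
  constructor
  · have h1 := ENNReal.summable_toReal hfin
    exact h1.congr fun p => ENNReal.toReal_ofReal (htermnn p)
  · have h1 : ∑' p : ℕ, ((p:ℝ)+1)^2 * lam p
        = (∑' p : ℕ, ENNReal.ofReal (((p:ℝ)+1)^2 * lam p)).toReal := by
      rw [ENNReal.tsum_toReal_eq (fun p => ENNReal.ofReal_ne_top)]
      exact tsum_congr fun p => (ENNReal.toReal_ofReal (htermnn p)).symm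
    rw [h1]
    calc (∑' p : ℕ, ENNReal.ofReal (((p:ℝ)+1)^2 * lam p)).toReal
        ≤ (ENNReal.ofReal (16 * (trD ρ + kinE ρ))).toReal :=
          ENNReal.toReal_mono ENNReal.ofReal_ne_top hBig
      _ = 16 * (trD ρ + kinE ρ) :=
          ENNReal.toReal_ofReal (by positivity)
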